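/- For n ≥ 1, the number of prime parking functions of length n is (n-1)^{n-1}, where 0^0 = 1. -/

import Mathlib

/-- `#{j : a j ≤ t}`. -/
def countLe {n : ℕ} (a : Fin n → ℕ) (t : ℕ) : ℕ :=
  (Finset.univ.filter fun j => a j ≤ t).card

/-- The `i`-th order statistic of `a` (`0`-indexed): the `i`-th entry of the weakly
increasing rearrangement of `a`. -/
noncomputable def orderStat {n : ℕ} (a : Fin n → ℕ) (i : Fin n) : ℕ :=
  sInf {t : ℕ | (i : ℕ) + 1 ≤ countLe a t}

open Finset

/-- number of j with b j = k mod m -/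
def gfib {m : ℕ} (b : Fin (m+1) → ZMod m) (k : ℕ) : ℕ :=
  (Finset.univ.filter fun j => b j = (k : ZMod m)).card

noncomputable def Spart {m : ℕ} (b : Fin (m+1) → ZMod m) (k : ℕ) : ℤ :=
  (∑ i ∈ Finset.range k, (gfib b i : ℤ)) - k

lemma eq_cast_iff {m : ℕ} [NeZero m] (x : ZMod m) (v : ℕ) (hv : v < m) :
    x = (v : ZMod m) ↔ x.val = v := by
  constructor
  · rintro rfl; exact ZMod.val_cast_of_lt hv
  · rintro rfl; exact (ZMod.natCast_rightInverse x).symm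

lemma gfib_eq {m : ℕ} [NeZero m] (b : Fin (m+1) → ZMod m) (q v : ℕ) (hv : v < m) :
    (Finset.univ.filter fun j => (b j - (q : ZMod m)).val = v).card = gfib b (q + v) := by
  unfold gfib
  congr 1
  apply Finset.filter_congr
  intro j _
  rw [← eq_cast_iff _ v hv, sub_eq_iff_eq_add', Nat.cast_add]

lemma gfib_sum_period {m : ℕ} [NeZero m] (b : Fin (m+1) → ZMod m) (k : ℕ) :
    ∑ i ∈ Finset.range m, gfib b (k + i) = m + 1 := by
  have hcard : (Finset.univ : Finset (Fin (m+1))).card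
      = ∑ i ∈ Finset.range m, (Finset.univ.filter fun j => (b j - (k : ZMod m)).val = i).card :=
    Finset.card_eq_sum_card_fiberwise (fun j _ => mem_range.mpr (ZMod.val_lt _))
  rw [Finset.sum_congr rfl (fun i hi => gfib_eq b k i (mem_range.mp hi))] at hcard
  simpa using hcard.symm

lemma sum_range_split (f : ℕ → ℤ) (k s : ℕ) :
    ∑ i ∈ Finset.range (k + s), f i
      = ∑ i ∈ Finset.range k, f i + ∑ i ∈ Finset.range s, f (k + i) := by
  have h : ∑ i ∈ Finset.Ico k (k + s), f i = ∑ i ∈ Finset.range s, f (k + i) := by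
    rw [Finset.sum_Ico_eq_sum_range]; simp
  rw [Finset.range_eq_Ico, ← Finset.sum_Ico_consecutive f (Nat.zero_le k) (Nat.le_add_right k s),
    h, ← Finset.range_eq_Ico]

lemma Spart_diff {m : ℕ} (b : Fin (m+1) → ZMod m) (q s : ℕ) :
    Spart b (q + s) = Spart b q + (∑ v ∈ Finset.range s, (gfib b (q + v) : ℤ)) - s := by
  unfold Spart
  rw [sum_range_split]
  push_cast
  ring

lemma Spart_add {m : ℕ} [NeZero m] (b : Fin (m+1) → ZMod m) (k : ℕ) :
    Spart b (k + m) = Spart b k + 1 := by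
  rw [Spart_diff]
  have h := gfib_sum_period b k
  have h2 : (∑ v ∈ Finset.range m, (gfib b (k + v) : ℤ)) = (m : ℤ) + 1 := by
    rw [← Nat.cast_sum, h]; push_cast; ring
  rw [h2]; ring

lemma countLe_shift {m : ℕ} [NeZero m] (b : Fin (m+1) → ZMod m) (q i : ℕ) (hi : i < m) :
    countLe (fun j => (b j + (-(q : ZMod m))).val) i
      = ∑ v ∈ Finset.range (i+1), gfib b (q + v) := by
  unfold countLe
  have hfib : (Finset.univ.filter fun j => (b j + (-(q : ZMod m))).val ≤ i).card
      = ∑ v ∈ Finset.range (i+1),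
          ((Finset.univ.filter fun j => (b j + (-(q : ZMod m))).val ≤ i).filter
            fun j => (b j + (-(q : ZMod m))).val = v).card :=
    Finset.card_eq_sum_card_fiberwise (fun j hj => by
      have hj' := Finset.mem_coe.mp hj; rw [mem_filter] at hj'
      exact Finset.mem_coe.mpr (mem_range.mpr (by have := hj'.2; omega)))
  rw [hfib]
  apply Finset.sum_congr rfl
  intro v hv
  have hv' : v < i + 1 := mem_range.mp hv
  rw [Finset.filter_filter]
  have : ∀ j : Fin (m+1),
      ((b j + (-(q : ZMod m))).val ≤ i ∧ (b j + (-(q : ZMod m))).val = v)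
        ↔ (b j - (q : ZMod m)).val = v := by
    intro j
    rw [← sub_eq_add_neg]
    constructor
    · rintro ⟨_, h⟩; exact h
    · intro h; exact ⟨by omega, h⟩
  rw [Finset.filter_congr (fun j _ => this j), gfib_eq b q v (by omega)]

lemma cycle_lemma' (m : ℕ) (hm : 1 ≤ m) (S : ℕ → ℤ)
    (hS : ∀ k, S (k + m) = S k + 1) :
    ∃! p, p < m ∧ ∀ s, 1 ≤ s → s ≤ m → S p < S (p + s) := by
  obtain ⟨q0, hq0, hq0min⟩ := Finset.exists_min_image (range m) S ⟨0, by simp; omega⟩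
  set A : Finset ℕ := (range m).filter (fun q => ∀ j ∈ range m, S q ≤ S j) with hA
  have hAne : A.Nonempty := ⟨q0, by simp only [hA, mem_filter]; exact ⟨hq0, hq0min⟩⟩
  set p := A.max' hAne with hp
  have hpA : p ∈ A := A.max'_mem hAne
  rw [hA, mem_filter, mem_range] at hpA
  obtain ⟨hpm, hpmin⟩ := hpA
  have good : p < m ∧ ∀ s, 1 ≤ s → s ≤ m → S p < S (p + s) := by
    refine ⟨hpm, fun s hs1 hsm => ?_⟩
    by_cases hcase : p + s < m
    · have hle : S p ≤ S (p + s) := hpmin _ (mem_range.mpr hcase)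
      rcases lt_or_eq_of_le hle with h | h
      · exact h
      · exfalso
        have hmem : p + s ∈ A := by
          rw [hA, mem_filter]
          exact ⟨mem_range.mpr hcase, fun j hj => h ▸ hpmin j hj⟩
        have := A.le_max' _ hmem
        omega
    · have hr : p + s - m < m := by omega
      have heq : S (p + s) = S (p + s - m) + 1 := by
        have h2 := hS (p + s - m)
        rw [show p + s - m + m = p + s by omega] at h2
        omega
      rw [heq]
      have := hpmin _ (mem_range.mpr hr)
      linarith
  refine ⟨p, good, ?_⟩
  rintro q ⟨hqm, hqgood⟩
  by_contra hne
  rcases lt_trichotomy q p with h | h | h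
  · have h1 := hqgood (p - q) (by omega) (by omega)
    rw [show q + (p - q) = p by omega] at h1
    have h2 := hpmin q (mem_range.mpr hqm)
    linarith
  · exact hne h
  · have h1 := good.2 (q - p) (by omega) (by omega)
    rw [show p + (q - p) = q by omega] at h1
    have h2 := hqgood (p + m - q) (by omega) (by omega)
    rw [show q + (p + m - q) = p + m by omega, hS p] at h2
    linarith

lemma cond_iff {m : ℕ} [NeZero m] (hm : 1 ≤ m) (b : Fin (m+1) → ZMod m) (q : ℕ) :
    (∀ i : ℕ, i + 1 < m + 1 → i + 1 < countLe (fun j => (b j + (-(q : ZMod m))).val) i)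
      ↔ (∀ s, 1 ≤ s → s ≤ m → Spart b q < Spart b (q + s)) := by
  have key : ∀ i : ℕ, i < m →
      (i + 1 < countLe (fun j => (b j + (-(q : ZMod m))).val) i
        ↔ Spart b q < Spart b (q + (i + 1))) := by
    intro i hi
    rw [countLe_shift b q i hi, Spart_diff b q (i+1)]
    have hc : ((∑ v ∈ Finset.range (i+1), gfib b (q + v) : ℕ) : ℤ)
        = ∑ v ∈ Finset.range (i+1), (gfib b (q + v) : ℤ) := by push_cast; rfl
    omega
  constructor
  · intro h s hs1 hsm
    have := (key (s-1) (by omega)).mp (h (s-1) (by omega))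
    rwa [show s - 1 + 1 = s by omega] at this
  · intro h i hi
    exact (key i (by omega)).mpr (h (i+1) (by omega) (by omega))

lemma exists_unique_shift {m : ℕ} (hm : 1 ≤ m) (b : Fin (m+1) → ZMod m) :
    ∃! c : ZMod m, ∀ i : ℕ, i + 1 < m + 1 →
      i + 1 < countLe (fun j => (b j + c).val) i := by
  haveI : NeZero m := ⟨by omega⟩
  obtain ⟨p, ⟨hpm, hpgood⟩, hpuniq⟩ := cycle_lemma' m hm (Spart b) (Spart_add b)
  refine ⟨-(p : ZMod m), (cond_iff hm b p).mpr hpgood, ?_⟩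
  intro c hc
  set q := (-c).val with hq
  have hqc : -(q : ZMod m) = c := by
    rw [hq, ZMod.natCast_rightInverse (-c), neg_neg]
  have hcond : ∀ i : ℕ, i + 1 < m + 1 →
      i + 1 < countLe (fun j => (b j + (-(q : ZMod m))).val) i := by
    rw [hqc]; exact hc
  have hqgood := (cond_iff hm b q).mp hcond
  have : q = p := hpuniq q ⟨ZMod.val_lt _, hqgood⟩
  rw [← hqc, this]

lemma card_T {m : ℕ} (hm : 1 ≤ m) :
    {b : Fin (m+1) → ZMod m |
        ∀ i : ℕ, i + 1 < m + 1 → i + 1 < countLe (fun j => (b j).val) i}.ncard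
      = m ^ m := by
  haveI : NeZero m := ⟨by omega⟩
  set T := {b : Fin (m+1) → ZMod m |
      ∀ i : ℕ, i + 1 < m + 1 → i + 1 < countLe (fun j => (b j).val) i} with hT
  have hmemT : ∀ b : Fin (m+1) → ZMod m, b ∈ T ↔
      ∀ i : ℕ, i + 1 < m + 1 → i + 1 < countLe (fun j => (b j).val) i := fun b => Iff.rfl
  have hΦ : Function.Bijective
      (fun cb : ZMod m × T => (fun j => (cb.2 : Fin (m+1) → ZMod m) j + cb.1)) := by
    constructor
    · rintro ⟨c, b, hb⟩ ⟨c', b', hb'⟩ h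
      simp only at h
      set g : Fin (m+1) → ZMod m := fun j => b j + c with hg
      have hbg : b = fun j => g j + (-c) := by funext j; simp [hg]
      have hbg' : b' = fun j => g j + (-c') := by
        funext j
        show b' j = g j + -c'
        rw [congrFun h j]
        simp
      obtain ⟨c0, _, huniq⟩ := exists_unique_shift hm g
      have h1 : -c = c0 := huniq (-c) (by rw [hmemT, hbg] at hb; exact hb)
      have h2 : -c' = c0 := huniq (-c') (by rw [hmemT, hbg'] at hb'; exact hb')
      have hcc : c = c' := by
        have := h1.trans h2.symm; exact neg_injective this
      subst hcc
      have hbb : b = b' := by rw [hbg, hbg']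
      simp [hbb]
    · intro g
      obtain ⟨c, hc, _⟩ := exists_unique_shift hm g
      refine ⟨⟨-c, ⟨fun j => g j + c, hc⟩⟩, ?_⟩
      funext j; simp
  have hcard := Nat.card_eq_of_bijective _ hΦ
  rw [Nat.card_prod] at hcard
  have h1 : Nat.card (ZMod m) = m := by simp [Nat.card_eq_fintype_card]
  have h2 : Nat.card (Fin (m+1) → ZMod m) = m ^ (m+1) := by
    simp [Nat.card_eq_fintype_card]
  have h3 : Nat.card T = T.ncard := Nat.card_coe_set_eq T
  rw [h1, h2, h3] at hcard
  have : m * T.ncard = m * m ^ m := by rw [hcard, pow_succ, mul_comm]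
  exact Nat.eq_of_mul_eq_mul_left (by omega) this


lemma countLe_mono {n : ℕ} (a : Fin n → ℕ) : Monotone (countLe a) := by
  intro s t hst
  apply Finset.card_le_card
  intro j hj
  rw [Finset.mem_filter] at *
  exact ⟨hj.1, le_trans hj.2 hst⟩

lemma countLe_le {n : ℕ} (a : Fin n → ℕ) (t : ℕ) : countLe a t ≤ n := by
  simpa [countLe] using Finset.card_le_card (Finset.filter_subset _ (Finset.univ : Finset (Fin n)))

lemma orderStat_le_iff {n : ℕ} (a : Fin n → ℕ) (i : Fin n) :
    orderStat a i ≤ (i : ℕ) ↔ (i : ℕ) + 1 ≤ countLe a i := by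
  constructor
  · intro h
    have hne : {t : ℕ | (i : ℕ) + 1 ≤ countLe a t}.Nonempty := by
      refine ⟨Finset.univ.sup a, ?_⟩
      have hu : (Finset.univ.filter fun j => a j ≤ Finset.univ.sup a) = Finset.univ :=
        Finset.filter_true_of_mem (fun j _ => Finset.le_sup (Finset.mem_univ j))
      have : countLe a (Finset.univ.sup a) = n := by simp [countLe, hu]
      simp only [Set.mem_setOf_eq, this]
      omega
    have hmem := Nat.sInf_mem hne
    exact le_trans hmem (countLe_mono a h)
  · intro h; exact Nat.sInf_le h

lemma all_le_of_count {n : ℕ} (a : Fin n → ℕ) (t : ℕ) (h : n ≤ countLe a t) :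
    ∀ j, a j ≤ t := by
  intro j
  have hcard : (Finset.univ.filter fun j => a j ≤ t).card = Fintype.card (Fin n) := by
    have := countLe_le a t
    simp only [countLe] at *
    simp only [Fintype.card_fin]
    omega
  have heq := Finset.eq_univ_of_card _ hcard
  have hj : j ∈ (Finset.univ.filter fun j => a j ≤ t) := by
    rw [heq]; exact Finset.mem_univ j
  exact (Finset.mem_filter.mp hj).2

lemma card_A {m : ℕ} (hm : 1 ≤ m) :
    {a : Fin (m+1) → ℕ | ∀ i : ℕ, i + 1 < m + 1 → i + 1 < countLe a i}.ncard = m ^ m := by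
  haveI : NeZero m := ⟨by omega⟩
  rw [← card_T hm]
  have himg : {a : Fin (m+1) → ℕ | ∀ i : ℕ, i + 1 < m + 1 → i + 1 < countLe a i}
      = (fun (b : Fin (m+1) → ZMod m) => (fun j => (b j).val)) ''
        {b : Fin (m+1) → ZMod m |
          ∀ i : ℕ, i + 1 < m + 1 → i + 1 < countLe (fun j => (b j).val) i} := by
    ext a
    constructor
    · intro ha
      have hbound : ∀ j, a j ≤ m - 1 := by
        apply all_le_of_count
        have h := ha (m-1) (by omega)
        omega
      have hval : (fun j => ((a j : ZMod m)).val) = a :=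
        funext fun j => ZMod.val_cast_of_lt (by have := hbound j; omega)
      refine ⟨fun j => (a j : ZMod m), ?_, hval⟩
      simp only [Set.mem_setOf_eq, hval]
      exact ha
    · rintro ⟨b, hb, rfl⟩; exact hb
  rw [himg]
  exact Set.ncard_image_of_injective _
    (fun b b' h => funext fun j => ZMod.val_injective m (congrFun h j))

/-- For `n ≥ 1`, the number of prime parking functions of length `n` is `(n-1)^(n-1)`
(with `0^0 = 1`). A prime parking function is a sequence whose weakly increasing
rearrangement satisfies `a_(i) ≤ i` for all `i`, and with
`#{j : a j ≤ i} > i + 1` for `i = 0, …, n-2`. -/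
theorem stmt5 (n : ℕ) (hn : 1 ≤ n) :
    {a : Fin n → ℕ |
        (∀ i : Fin n, orderStat a i ≤ (i : ℕ)) ∧
          ∀ i : ℕ, i + 1 < n → i + 1 < countLe a i}.ncard
      = (n - 1) ^ (n - 1) := by
  obtain ⟨m, rfl⟩ : ∃ m, n = m + 1 := ⟨n - 1, by omega⟩
  simp only [Nat.add_sub_cancel]
  rcases Nat.eq_zero_or_pos m with rfl | hm
  · -- n = 1
    have hset : {a : Fin 1 → ℕ |
        (∀ i : Fin 1, orderStat a i ≤ (i : ℕ)) ∧
          ∀ i : ℕ, i + 1 < 1 → i + 1 < countLe a i}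
        = {fun _ => 0} := by
      ext a
      simp only [Set.mem_setOf_eq, Set.mem_singleton_iff]
      constructor
      · rintro ⟨h1, _⟩
        have := (orderStat_le_iff a 0).mp (h1 0)
        simp only [Fin.val_zero, zero_add] at this
        have h0 : a 0 = 0 := by
          have hpos : 0 < (Finset.univ.filter fun j : Fin 1 => a j ≤ 0).card := by
            simpa [countLe] using this
          obtain ⟨j, hj⟩ := Finset.card_pos.mp hpos
          rw [Finset.mem_filter] at hj
          have hj0 : j = 0 := Subsingleton.elim _ _
          rw [hj0] at hj
          omega
        funext j
        have : j = 0 := Subsingleton.elim _ _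
        rw [this, h0]
      · rintro rfl
        refine ⟨fun i => ?_, fun i hi => by omega⟩
        rw [orderStat_le_iff]
        have hc : countLe (fun _ : Fin 1 => (0:ℕ)) (i : ℕ) = 1 := by
          simp [countLe]
        have hlt := i.isLt
        omega
    rw [hset]
    simp
  · -- m ≥ 1
    have hset : {a : Fin (m+1) → ℕ |
        (∀ i : Fin (m+1), orderStat a i ≤ (i : ℕ)) ∧
          ∀ i : ℕ, i + 1 < m + 1 → i + 1 < countLe a i}
        = {a : Fin (m+1) → ℕ | ∀ i : ℕ, i + 1 < m + 1 → i + 1 < countLe a i} := by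
      ext a
      simp only [Set.mem_setOf_eq]
      constructor
      · rintro ⟨_, h2⟩; exact h2
      · intro h
        refine ⟨fun i => ?_, h⟩
        rw [orderStat_le_iff]
        by_cases hi : (i : ℕ) + 1 < m + 1
        · have := h i hi; omega
        · have hieq : (i : ℕ) = m := by have := i.isLt; omega
          have h1 := h (m-1) (by omega)
          have h2 : countLe a (m-1) ≤ countLe a (i : ℕ) :=
            countLe_mono a (by omega)
          have h3 := countLe_le a (m-1)
          omega
    rw [hset]
    exact card_A hm
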